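/- arXiv:2206.07441 — 4 statements merged into one kernel-verified Lean document; each statement's English description precedes it below -/
import Mathlib

section
/- If two tests α, β ∈ E are E-separable (α #_E β), then for every Mealy machine N with the same input/output alphabets as M satisfying λ_M(γ) = λ_N(γ) for all γ ∈ E, the states δ_N(α) and δ_N(β) of N are distinct. -/
structure NFA' (X : Type) where
  S : Type
  step : S → X → Set S
  start : S

def NFA'.steps {X : Type} (A : NFA' X) : A.S → List X → Set A.S
  | s, [] => {s}
  | s, x :: w => ⋃ t ∈ A.step s x, A.steps t w

/-- The language of a state: words on which `A` has a run starting from `s`. -/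
def NFA'.lang {X : Type} (A : NFA' X) (s : A.S) : Set (List X) :=
  {w | (A.steps s w).Nonempty}

structure Mealy (I O : Type) where
  S : Type
  next : S → I → S
  out : S → I → O
  start : S

def Mealy.nexts {I O : Type} (M : Mealy I O) : M.S → List I → M.S
  | s, [] => s
  | s, x :: w => M.nexts (M.next s x) w

def Mealy.outs {I O : Type} (M : Mealy I O) : M.S → List I → List O
  | _, [] => []
  | s, x :: w => M.out s x :: M.outs (M.next s x) w

lemma Mealy.outs_append {I O : Type} (M : Mealy I O) (s : M.S) (u v : List I) :
    M.outs s (u ++ v) = M.outs s u ++ M.outs (M.nexts s u) v := by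
  induction u generalizing s with
  | nil => simp [Mealy.outs, Mealy.nexts]
  | cons x w ih => simp [Mealy.outs, Mealy.nexts, ih]

lemma Mealy.outs_length {I O : Type} (M : Mealy I O) (s : M.S) (w : List I) :
    (M.outs s w).length = w.length := by
  induction w generalizing s with
  | nil => rfl
  | cons x w ih => simp [Mealy.outs, ih]

/-- If tests α, β ∈ E are E-separable, then any machine N agreeing with M on E
reaches distinct states on α and β. -/
theorem separable_distinct_states {I O : Type} (M N : Mealy I O)
    (E : Set (List I)) (hfin : E.Finite)
    (hpc : ∀ u v : List I, u <+: v → v ∈ E → u ∈ E)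
    (α β : List I) (hα : α ∈ E) (hβ : β ∈ E)
    (hsep : ∃ γ : List I, α ++ γ ∈ E ∧ β ++ γ ∈ E ∧
      M.outs (M.nexts M.start α) γ ≠ M.outs (M.nexts M.start β) γ)
    (hagree : ∀ γ ∈ E, M.outs M.start γ = N.outs N.start γ) :
    N.nexts N.start α ≠ N.nexts N.start β := by
  obtain ⟨γ, hαγ, hβγ, hne⟩ := hsep
  intro h
  have key : ∀ δ : List I, δ ∈ E → δ ++ γ ∈ E →
      M.outs (M.nexts M.start δ) γ = N.outs (N.nexts N.start δ) γ := by
    intro δ hδ hδγ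
    have h1 := hagree _ hδγ
    have h2 := hagree _ hδ
    rw [Mealy.outs_append, Mealy.outs_append] at h1
    rw [h2] at h1
    exact List.append_cancel_left h1
  have hA := key α hα hαγ
  have hB := key β hβ hβγ
  rw [h] at hA
  exact hne (hA.trans hB.symm)
end

section
/- Let M be a Mealy machine with state set S_M and A an NFA over I_M with state set S_A. For all s, t ∈ S_M and a ∈ S_A: if s and t are distinguishable in context a (i.e., some α ∈ L_A(a) satisfies λ_M(s,α) ≠ λ_M(t,α)), then there exists such a distinguishing word α ∈ L_A(a) with |α| ≤ |S_M|·|S_A|. -/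
namespace ShortDist

variable {I O : Type} (M : Mealy I O) (A : NFA' I)

/-- `k`-bounded indistinguishability in context `a`. -/
def R (k : ℕ) (a : A.S) (s t : M.S) : Prop :=
  ∀ α ∈ A.lang a, α.length ≤ k → M.outs s α = M.outs t α

lemma R_refl (k : ℕ) (a : A.S) (s : M.S) : R M A k a s s := fun _ _ _ => rfl

lemma R_symm {k a s t} (h : R M A k a s t) : R M A k a t s :=
  fun α hα hl => (h α hα hl).symm

lemma R_trans {k a s t u} (h1 : R M A k a s t) (h2 : R M A k a t u) : R M A k a s u :=
  fun α hα hl => (h1 α hα hl).trans (h2 α hα hl)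

lemma R_mono {k j : ℕ} {a s t} (hkj : j ≤ k) (h : R M A k a s t) : R M A j a s t :=
  fun α hα hl => h α hα (hl.trans hkj)

lemma nil_mem_lang (a : A.S) : [] ∈ A.lang a := ⟨a, rfl⟩

lemma cons_mem_lang (a : A.S) (x : I) (β : List I) :
    (x :: β) ∈ A.lang a ↔ ∃ b ∈ A.step a x, β ∈ A.lang b := by
  simp [NFA'.lang, NFA'.steps, Set.Nonempty, Set.mem_iUnion]
  tauto

lemma R_succ {k : ℕ} {a : A.S} {s t : M.S} :
    R M A (k+1) a s t ↔ ∀ x, ∀ b ∈ A.step a x,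
      M.out s x = M.out t x ∧ R M A k b (M.next s x) (M.next t x) := by
  constructor
  · intro h x b hb
    constructor
    · have h1 : [x] ∈ A.lang a := (cons_mem_lang A a x []).2 ⟨b, hb, nil_mem_lang A b⟩
      have := h [x] h1 (by simp)
      simpa [Mealy.outs] using this
    · intro β hβ hl
      have h1 : (x :: β) ∈ A.lang a := (cons_mem_lang A a x β).2 ⟨b, hb, hβ⟩
      have := h (x :: β) h1 (by simpa using Nat.succ_le_succ hl)
      simp [Mealy.outs] at this
      exact this.2
  · intro h α hα hl
    match α with
    | [] => rfl
    | x :: β =>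
      obtain ⟨b, hb, hβ⟩ := (cons_mem_lang A a x β).1 hα
      obtain ⟨ho, hR⟩ := h x b hb
      simp [Mealy.outs, ho, hR β hβ (Nat.le_of_succ_le_succ hl)]

/-- The refinement chain has stabilized at stage `k`. -/
def Stab (k : ℕ) : Prop := ∀ a s t, R M A k a s t → R M A (k+1) a s t

lemma stab_succ {k : ℕ} (h : Stab M A k) : Stab M A (k+1) := by
  intro a s t ht
  rw [R_succ] at ht ⊢
  intro x b hb
  obtain ⟨ho, hR⟩ := ht x b hb
  exact ⟨ho, h _ _ _ hR⟩

lemma stab_add {k : ℕ} (h : Stab M A k) (j : ℕ) : Stab M A (k + j) := by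
  induction j with
  | zero => exact h
  | succ n ih => exact stab_succ M A ih

lemma R_all {k : ℕ} (h : Stab M A k) {a s t} (hR : R M A k a s t) (j : ℕ) :
    R M A (k + j) a s t := by
  induction j with
  | zero => exact hR
  | succ n ih => exact stab_add M A h n _ _ _ ih

lemma exists_stab [Fintype M.S] [Fintype A.S] (a0 : A.S) (s0 : M.S) :
    ∃ k < Fintype.card M.S * Fintype.card A.S, Stab M A k := by
  classical
  by_contra hcon
  push_neg at hcon
  set N := Fintype.card M.S * Fintype.card A.S with hN
  let g : ℕ → A.S × M.S → A.S × Set M.S := fun k p => (p.1, {u | R M A k p.1 p.2 u})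
  let c : ℕ → ℕ := fun k => (Finset.univ.image (g k)).card
  have hlt : ∀ k, ¬ Stab M A k → c k < c (k+1) := by
    intro k hk
    have hk' : ∃ a s t, R M A k a s t ∧ ¬ R M A (k+1) a s t := by
      simpa [Stab] using hk
    obtain ⟨a, s, t, hst, hst'⟩ := hk'
    let f : A.S × Set M.S → A.S × Set M.S :=
      fun q => (q.1, {u | ∃ v ∈ q.2, R M A k q.1 v u})
    have hfg : ∀ p, f (g (k+1) p) = g k p := by
      intro p
      show (p.1, _) = (p.1, _)
      congr 1
      ext u
      constructor
      · rintro ⟨v, hv, hvu⟩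
        exact R_trans M A (R_mono M A (Nat.le_succ k) hv) hvu
      · intro hu
        exact ⟨p.2, R_refl M A (k+1) p.1 p.2, hu⟩
    have himg : Finset.univ.image (g k) = (Finset.univ.image (g (k+1))).image f := by
      rw [Finset.image_image]
      exact Finset.image_congr (fun p _ => (hfg p).symm)
    have hle : c k ≤ c (k+1) := by
      rw [show c k = ((Finset.univ.image (g (k+1))).image f).card from by rw [← himg]]
      exact Finset.card_image_le
    rcases lt_or_eq_of_le hle with h' | h'
    · exact h'
    · exfalso
      have hinj : Set.InjOn f (Finset.univ.image (g (k+1))) := by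
        rw [← Finset.card_image_iff, ← himg]
        exact h'
      have hmem1 : g (k+1) (a, s) ∈ Finset.univ.image (g (k+1)) :=
        Finset.mem_image_of_mem _ (Finset.mem_univ _)
      have hmem2 : g (k+1) (a, t) ∈ Finset.univ.image (g (k+1)) :=
        Finset.mem_image_of_mem _ (Finset.mem_univ _)
      have hfeq : f (g (k+1) (a, s)) = f (g (k+1) (a, t)) := by
        rw [hfg, hfg]
        show (a, _) = (a, _)
        congr 1
        ext u
        exact ⟨fun hu => R_trans M A (R_symm M A hst) hu, fun hu => R_trans M A hst hu⟩
      have heq := hinj hmem1 hmem2 hfeq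
      have : t ∈ {u | R M A (k+1) a s u} := by
        have ht : t ∈ {u | R M A (k+1) a t u} := R_refl M A (k+1) a t
        have h2 : ({u | R M A (k+1) a s u} : Set M.S) = {u | R M A (k+1) a t u} :=
          congrArg Prod.snd heq
        rw [h2]; exact ht
      exact hst' this
  have hmono : ∀ k, k < N → c k < c (k+1) := fun k hk => hlt k (hcon k hk)
  have hgrow : ∀ n ≤ N, n + c 0 ≤ c n := by
    intro n hn
    induction n with
    | zero => simp
    | succ m ih =>
      have h1 := ih (Nat.le_of_succ_le hn)
      have h2 := hmono m (Nat.lt_of_succ_le hn)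
      omega
  have hc0 : 1 ≤ c 0 := by
    have : (Finset.univ.image (g 0)).Nonempty :=
      ⟨g 0 (a0, s0), Finset.mem_image_of_mem _ (Finset.mem_univ _)⟩
    exact Finset.card_pos.mpr this
  have hub : c N ≤ N := by
    calc c N ≤ Finset.univ.card := Finset.card_image_le
    _ = Fintype.card (A.S × M.S) := Finset.card_univ
    _ = N := by rw [Fintype.card_prod, hN, Nat.mul_comm]
  have := hgrow N le_rfl
  omega

end ShortDist

/-- If some word of `L_A(a)` distinguishes s and t, then some word of
`L_A(a)` of length at most `|S_M|·|S_A|` does so. -/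
theorem short_distinguishing_word {I O : Type} (M : Mealy I O) (A : NFA' I)
    [Fintype M.S] [Fintype A.S] (s t : M.S) (a : A.S)
    (h : ∃ α ∈ A.lang a, M.outs s α ≠ M.outs t α) :
    ∃ α ∈ A.lang a, α.length ≤ Fintype.card M.S * Fintype.card A.S ∧
      M.outs s α ≠ M.outs t α := by
  obtain ⟨α₀, hα₀, hne⟩ := h
  by_contra hc
  push_neg at hc
  obtain ⟨k, hk, hstab⟩ := ShortDist.exists_stab M A a s
  have hRN : ShortDist.R M A (Fintype.card M.S * Fintype.card A.S) a s t :=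
    fun α hα hl => hc α hα hl
  have hRk : ShortDist.R M A k a s t := ShortDist.R_mono M A (le_of_lt hk) hRN
  have hall := ShortDist.R_all M A hstab hRk α₀.length
  exact hne (hall α₀ hα₀ (Nat.le_add_left _ _))
end

section
/- Let M be a Mealy machine, A an NFA over I_M, and suppose (s,a) ≁ (t,b) (some word in L_A(a) ∩ L_A(b) distinguishes s and t in M) and L_A(a) ⊇ L_A(b). Then there exists α ∈ L_A(b) with |α| ≤ |S_M|·|S_A| such that λ_M(s, α) ≠ λ_M(t, α). -/
namespace MAux

variable {I O : Type} (M : Mealy I O) (A : NFA' I)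

lemma nil_mem_lang (q : A.S) : ([] : List I) ∈ A.lang q := ⟨q, rfl⟩

lemma cons_mem_lang_iff (q : A.S) (x : I) (w : List I) :
    (x :: w) ∈ A.lang q ↔ ∃ q' ∈ A.step q x, w ∈ A.lang q' := by
  constructor
  · rintro ⟨r, hr⟩
    simp only [NFA'.steps, Set.mem_iUnion] at hr
    obtain ⟨q', hq', hr⟩ := hr
    exact ⟨q', hq', r, hr⟩
  · rintro ⟨q', hq', r, hr⟩
    refine ⟨r, ?_⟩
    simp only [NFA'.steps, Set.mem_iUnion]
    exact ⟨q', hq', hr⟩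

def D (k : ℕ) (q : A.S) (s t : M.S) : Prop :=
  ∃ α ∈ A.lang q, α.length ≤ k ∧ M.outs s α ≠ M.outs t α

lemma D_mono {k m : ℕ} (h : k ≤ m) {q s t} (hd : D M A k q s t) : D M A m q s t := by
  obtain ⟨α, h1, h2, h3⟩ := hd
  exact ⟨α, h1, h2.trans h, h3⟩

lemma D_succ (k : ℕ) (q : A.S) (s t : M.S) :
    D M A (k + 1) q s t ↔
      ∃ x, ∃ q' ∈ A.step q x,
        (M.out s x ≠ M.out t x ∨ D M A k q' (M.next s x) (M.next t x)) := by
  constructor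
  · rintro ⟨α, h1, h2, h3⟩
    match α with
    | [] => simp [Mealy.outs] at h3
    | x :: w =>
      rw [cons_mem_lang_iff] at h1
      obtain ⟨q', hq', hw⟩ := h1
      refine ⟨x, q', hq', ?_⟩
      by_cases hx : M.out s x = M.out t x
      · right
        refine ⟨w, hw, by simpa using h2, ?_⟩
        simp only [Mealy.outs, hx] at h3
        intro he; exact h3 (by rw [he])
      · left; exact hx
  · rintro ⟨x, q', hq', h | h⟩
    · refine ⟨[x], ?_, by simp, ?_⟩
      · rw [cons_mem_lang_iff]; exact ⟨q', hq', nil_mem_lang A q'⟩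
      · simp [Mealy.outs, h]
    · obtain ⟨w, hw, h2, h3⟩ := h
      refine ⟨x :: w, ?_, by simpa using h2, ?_⟩
      · rw [cons_mem_lang_iff]; exact ⟨q', hq', hw⟩
      · simp only [Mealy.outs]
        intro he
        exact h3 (List.cons.injEq .. ▸ he |>.2)

lemma D_stab {k : ℕ} (hs : ∀ q s t, D M A (k+1) q s t ↔ D M A k q s t) :
    ∀ m, k ≤ m → ∀ q s t, D M A m q s t ↔ D M A k q s t := by
  intro m
  induction m with
  | zero =>
    intro h q s t
    have : k = 0 := Nat.le_zero.mp h
    subst this; rfl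
  | succ n ih =>
    intro h q s t
    rcases Nat.lt_or_ge k (n+1) with hlt | hge
    · have hkn : k ≤ n := by omega
      rw [D_succ]
      constructor
      · rintro ⟨x, q', hq', hc | hd⟩
        · exact (hs q s t).mp ((D_succ M A k q s t).mpr ⟨x, q', hq', Or.inl hc⟩)
        · have := (ih hkn q' (M.next s x) (M.next t x)).mp hd
          exact (hs q s t).mp ((D_succ M A k q s t).mpr ⟨x, q', hq', Or.inr this⟩)
      · intro hd
        obtain ⟨x, q', hq', hc⟩ := (D_succ M A k q s t).mp ((hs q s t).mpr hd)
        exact ⟨x, q', hq', hc.imp id (fun hh => (ih hkn _ _ _).mpr hh)⟩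
    · have : k = n + 1 := by omega
      subst this; rfl


attribute [local instance] Classical.propDecidable

def E (k : ℕ) (q : A.S) : Setoid M.S where
  r s t := ¬ D M A k q s t
  iseqv := by
    refine ⟨fun s => ?_, fun {s t} h => ?_, fun {s t u} h1 h2 => ?_⟩
    · rintro ⟨α, _, _, h3⟩; exact h3 rfl
    · rintro ⟨α, ha, hl, h3⟩; exact h ⟨α, ha, hl, h3.symm⟩
    · rintro ⟨α, ha, hl, h3⟩
      by_cases he : M.outs s α = M.outs t α
      · exact h2 ⟨α, ha, hl, he ▸ h3⟩
      · exact h1 ⟨α, ha, hl, he⟩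

variable [Fintype M.S] [Fintype A.S]

noncomputable def mu (k : ℕ) : ℕ :=
  ∑ q : A.S, Fintype.card (Quotient (E M A k q))

def qmap (k : ℕ) (q : A.S) : Quotient (E M A (k+1) q) → Quotient (E M A k q) :=
  Quotient.map id (fun s t h hd => h (D_mono M A (Nat.le_succ k) hd))

lemma qmap_surj (k : ℕ) (q : A.S) : Function.Surjective (qmap M A k q) := by
  intro y
  induction y using Quotient.ind with
  | _ s => exact ⟨Quotient.mk _ s, rfl⟩

lemma mu_le_mu_succ (k : ℕ) : mu M A k ≤ mu M A (k+1) :=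
  Finset.sum_le_sum fun q _ => Fintype.card_le_of_surjective _ (qmap_surj M A k q)

lemma mu_lt_of_not_stable (k : ℕ) (q : A.S) (s t : M.S)
    (hD1 : D M A (k+1) q s t) (hD0 : ¬ D M A k q s t) :
    mu M A k < mu M A (k+1) := by
  have hq : Fintype.card (Quotient (E M A k q)) < Fintype.card (Quotient (E M A (k+1) q)) := by
    refine Fintype.card_lt_of_surjective_not_injective _ (qmap_surj M A k q) ?_
    intro hinj
    have h1 : qmap M A k q (Quotient.mk _ s) = qmap M A k q (Quotient.mk _ t) :=
      Quotient.sound hD0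
    have := hinj h1
    exact (Quotient.exact this) hD1
  calc mu M A k = ∑ q' : A.S, Fintype.card (Quotient (E M A k q')) := rfl
    _ < ∑ q' : A.S, Fintype.card (Quotient (E M A (k+1) q')) := by
        exact Finset.sum_lt_sum (fun i _ => Fintype.card_le_of_surjective _ (qmap_surj M A k i))
          ⟨q, Finset.mem_univ q, hq⟩
    _ = mu M A (k+1) := rfl

lemma mu_le (k : ℕ) [Nonempty M.S] : mu M A k ≤ Fintype.card M.S * Fintype.card A.S := by
  calc mu M A k ≤ ∑ _q : A.S, Fintype.card M.S :=
        Finset.sum_le_sum fun q _ =>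
          Fintype.card_le_of_surjective (Quotient.mk _) (fun y => Quotient.exists_rep y)
    _ = Fintype.card A.S * Fintype.card M.S := by simp [Finset.sum_const, Finset.card_univ]
    _ = Fintype.card M.S * Fintype.card A.S := Nat.mul_comm _ _

lemma mu_ge (k : ℕ) [Nonempty M.S] : Fintype.card A.S ≤ mu M A k := by
  calc Fintype.card A.S = ∑ _q : A.S, 1 := by simp
    _ ≤ mu M A k := Finset.sum_le_sum fun q _ =>
        Fintype.card_pos_iff.mpr ⟨Quotient.mk _ (Classical.arbitrary _)⟩

lemma exists_stable [Nonempty M.S] [Nonempty A.S] :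
    ∃ k < Fintype.card M.S * Fintype.card A.S,
      ∀ q s t, D M A (k+1) q s t ↔ D M A k q s t := by
  set N := Fintype.card M.S * Fintype.card A.S with hN
  by_contra hc
  push_neg at hc
  have key : ∀ k, k ≤ N → Fintype.card A.S + k ≤ mu M A k := by
    intro k
    induction k with
    | zero => intro _; simpa using mu_ge M A 0
    | succ n ih =>
      intro hn
      have h1 := ih (Nat.le_of_succ_le hn)
      obtain ⟨q, s, t, hor⟩ := hc n (by omega)
      have h2 : mu M A n < mu M A (n+1) := by
        rcases hor with ⟨hD1, hD0⟩ | ⟨hD1, hD0⟩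
        · exact mu_lt_of_not_stable M A n q s t hD1 hD0
        · exact absurd (D_mono M A (Nat.le_succ n) hD0) hD1
      omega
  have h1 := key N le_rfl
  have h2 := mu_le M A N
  have h3 : 0 < Fintype.card A.S := Fintype.card_pos
  omega

end MAux

/-- Theorem 1: if (s,a) ≁ (t,b) and L_A(a) ⊇ L_A(b), then a short word of
`L_A(b)`, of length at most `|S_M|·|S_A|`, distinguishes s and t. -/
theorem short_distinguishing_word_pair {I O : Type} (M : Mealy I O) (A : NFA' I)
    [Fintype M.S] [Fintype A.S] (s t : M.S) (a b : A.S)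
    (hsub : A.lang b ⊆ A.lang a)
    (h : ∃ α ∈ A.lang a ∩ A.lang b, M.outs s α ≠ M.outs t α) :
    ∃ α ∈ A.lang b, α.length ≤ Fintype.card M.S * Fintype.card A.S ∧
      M.outs s α ≠ M.outs t α := by
  classical
  obtain ⟨α, ⟨_, hb⟩, hne⟩ := h
  haveI : Nonempty M.S := ⟨s⟩
  haveI : Nonempty A.S := ⟨b⟩
  obtain ⟨k, hk, hstable⟩ := MAux.exists_stable M A
  have hD : MAux.D M A α.length b s t := ⟨α, hb, le_rfl, hne⟩
  have hDm : MAux.D M A (max k α.length) b s t := MAux.D_mono M A (le_max_right _ _) hD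
  have hDk : MAux.D M A k b s t :=
    (MAux.D_stab M A hstable _ (le_max_left _ _) b s t).mp hDm
  obtain ⟨β, h1, h2, h3⟩ := hDk
  exact ⟨β, h1, h2.trans (le_of_lt hk), h3⟩
end

section
/- Suppose every word α ∈ L_A \ E has a prefix β ∈ E that is (k+1)-saturated with respect to E. Then E is k-complete in the context of L_A: any Mealy machine N with at most k states and the same alphabets as M that agrees with M on all words of E agrees with M on all of L_A. -/
/-- The location corresponding to a node a/α. -/
def loc {I O : Type} (M : Mealy I O) {SA : Type} (p : SA × List I) :
    M.S × SA :=
  (M.nexts M.start p.2, p.1)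

/-- Incompatibility of two state pairs: some common word distinguishes them. -/
def incompat {I O : Type} (M : Mealy I O) (A : NFA' I)
    (p q : M.S × A.S) : Prop :=
  ∃ α ∈ A.lang p.2 ∩ A.lang q.2, M.outs p.1 α ≠ M.outs q.1 α

/-- E-separability of two tests (α #_E β). -/
def sep {I O : Type} (M : Mealy I O) (E : Set (List I)) (α β : List I) : Prop :=
  ∃ γ : List I, α ++ γ ∈ E ∧ β ++ γ ∈ E ∧
    M.outs (M.nexts M.start α) γ ≠ M.outs (M.nexts M.start β) γ

/-- E is incompatibility-preserving w.r.t. a set of nodes R. -/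
def incompatPres {I O : Type} (M : Mealy I O) (A : NFA' I) (E : Set (List I))
    (R : Set (A.S × List I)) : Prop :=
  ∀ p ∈ R, ∀ q ∈ R, incompat M A (loc M p) (loc M q) → sep M E p.2 q.2

/-- Node precedence: b/β ⪯ a/α iff α = βγ and a ∈ Δ_A(b,γ). -/
def prec {X : Type} (A : NFA' X) (p q : A.S × List X) : Prop :=
  ∃ γ : List X, q.2 = p.2 ++ γ ∧ q.1 ∈ A.steps p.1 γ

/-- A node a/α is k-saturated w.r.t. E and ⊑ (`sq`): there is a monotonous
ranking of k nodes of Γ(E), all preceding a/α, w.r.t. which E is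
incompatibility-preserving. -/
def saturated {I O : Type} (M : Mealy I O) (A : NFA' I) (E : Set (List I))
    (sq : A.S → A.S → Prop) (k : ℕ) (node : A.S × List I) : Prop :=
  ∃ R : Fin k → A.S × List I,
    (∀ i, (R i).2 ∈ E ∧ (R i).1 ∈ A.steps A.start (R i).2) ∧
    (∀ i j : Fin k, i < j → (R i).2 <+: (R j).2 ∧ (R i).2 ≠ (R j).2) ∧
    (∀ i j : Fin k, i ≤ j → sq (R j).1 (R i).1) ∧
    (∀ i, prec A (R i) node) ∧
    incompatPres M A E (Set.range R)

lemma Mealy.nexts_append {I O : Type} (M : Mealy I O) (s : M.S) (u v : List I) :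
    M.nexts s (u ++ v) = M.nexts (M.nexts s u) v := by
  induction u generalizing s with
  | nil => rfl
  | cons x u ih => simp [Mealy.nexts, ih]

lemma NFA'.mem_steps_append {X : Type} (A : NFA' X) (u : List X) :
    ∀ (s r : A.S) (v : List X),
    r ∈ A.steps s (u ++ v) ↔ ∃ t ∈ A.steps s u, r ∈ A.steps t v := by
  induction u with
  | nil => intro s r v; simp [NFA'.steps]
  | cons x u ih =>
    intro s r v
    simp only [List.cons_append, NFA'.steps, Set.mem_iUnion]
    constructor
    · rintro ⟨t, ht, hr⟩
      obtain ⟨w, hw, hrw⟩ := (ih t r v).mp hr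
      exact ⟨w, ⟨t, ht, hw⟩, hrw⟩
    · rintro ⟨w, ⟨t, ht, hw⟩, hrw⟩
      exact ⟨t, ht, (ih t r v).mpr ⟨w, hw, hrw⟩⟩

lemma outs_cancel {I O : Type} (M N : Mealy I O) (u v : List I)
    (h1 : M.outs M.start (u ++ v) = N.outs N.start (u ++ v))
    (h2 : M.outs M.start u = N.outs N.start u) :
    M.outs (M.nexts M.start u) v = N.outs (N.nexts N.start u) v := by
  rw [Mealy.outs_append, Mealy.outs_append, h2] at h1
  exact List.append_cancel_left h1

/-- Theorem 2: if every word of L_A \ E has a (k+1)-saturated prefix in E,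
then E is k-complete in the context of L_A. -/
theorem saturated_complete {I O : Type} (M : Mealy I O) (A : NFA' I)
    (E : Set (List I)) (k : ℕ)
    (sq : A.S → A.S → Prop) (hrefl : ∀ a, sq a a)
    (hsq : ∀ a b : A.S, sq a b → A.lang a ⊆ A.lang b)
    (hE : E ⊆ A.lang A.start) (hEfin : E.Finite)
    (hEpc : ∀ u v : List I, u <+: v → v ∈ E → u ∈ E)
    (hsat : ∀ α ∈ A.lang A.start \ E, ∃ β ∈ E, β <+: α ∧
      ∀ a ∈ A.steps A.start β, saturated M A E sq (k + 1) (a, β)) :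
    ∀ N : Mealy I O, Finite N.S → Nat.card N.S ≤ k →
      (∀ γ ∈ E, M.outs M.start γ = N.outs N.start γ) →
      ∀ γ ∈ A.lang A.start, M.outs M.start γ = N.outs N.start γ := by
  intro N hNfin hNcard hMN
  suffices h : ∀ n (γ : List I), γ.length ≤ n → γ ∈ A.lang A.start →
      M.outs M.start γ = N.outs N.start γ by
    intro γ hγ; exact h γ.length γ le_rfl hγ
  intro n
  induction n with
  | zero =>
    intro γ hl _
    have : γ = [] := List.length_eq_zero_iff.mp (Nat.le_zero.mp hl)
    subst this; rfl
  | succ n ih =>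
    intro γ hl hγ
    by_cases hγE : γ ∈ E
    · exact hMN γ hγE
    obtain ⟨β, hβE, ⟨η, hβη⟩, hsatβ⟩ := hsat γ ⟨hγ, hγE⟩
    subst hβη
    obtain ⟨z, hz⟩ := hγ
    rw [NFA'.mem_steps_append] at hz
    obtain ⟨a, ha, hza⟩ := hz
    obtain ⟨R, hRE, hRlt, hRmono, hRprec, hRpres⟩ := hsatβ a ha
    -- pigeonhole: two ranking nodes reach the same state of N
    have hFN : Fintype N.S := Fintype.ofFinite N.S
    have hcard : Fintype.card N.S < Fintype.card (Fin (k + 1)) := by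
      rw [← Nat.card_eq_fintype_card, Fintype.card_fin]; omega
    obtain ⟨i0, j0, hij0, hEq0⟩ := Fintype.exists_ne_map_eq_of_card_lt
      (fun i : Fin (k + 1) => N.nexts N.start (R i).2) hcard
    have key : ∀ i j : Fin (k + 1), i < j →
        N.nexts N.start (R i).2 = N.nexts N.start (R j).2 →
        M.outs M.start (β ++ η) = N.outs N.start (β ++ η) := by
      intro i j hij hEq
      -- the two pairs are compatible in M
      have hninc : ¬ incompat M A (loc M (R i)) (loc M (R j)) := by
        intro hinc
        obtain ⟨γ', hγ'i, hγ'j, hne⟩ :=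
          hRpres (R i) ⟨i, rfl⟩ (R j) ⟨j, rfl⟩ hinc
        apply hne
        have e1 := outs_cancel M N (R i).2 γ' (hMN _ hγ'i)
          (hMN _ (hEpc _ _ ⟨γ', rfl⟩ hγ'i))
        have e2 := outs_cancel M N (R j).2 γ' (hMN _ hγ'j)
          (hMN _ (hEpc _ _ ⟨γ', rfl⟩ hγ'j))
        rw [e1, e2, hEq]
      obtain ⟨γj, hβeq, haj⟩ := hRprec j
      simp only at hβeq
      -- γj ++ η is in the language of both a_j and a_i
      have hlangj : γj ++ η ∈ A.lang (R j).1 := by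
        refine ⟨z, ?_⟩
        rw [NFA'.mem_steps_append]
        exact ⟨a, haj, hza⟩
      have hlangi : γj ++ η ∈ A.lang (R i).1 :=
        hsq _ _ (hRmono i j hij.le) hlangj
      -- compatibility gives equal M-outputs
      have houteq : M.outs (M.nexts M.start (R i).2) (γj ++ η)
          = M.outs (M.nexts M.start (R j).2) (γj ++ η) := by
        by_contra hne
        exact hninc ⟨γj ++ η, ⟨hlangi, hlangj⟩, hne⟩
      -- the shorter word (R i).2 ++ (γj ++ η) is in L_A
      have hw' : (R i).2 ++ (γj ++ η) ∈ A.lang A.start := by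
        obtain ⟨z', hz'⟩ := hlangi
        refine ⟨z', ?_⟩
        rw [NFA'.mem_steps_append]
        exact ⟨(R i).1, (hRE i).2, hz'⟩
      have hlen : ((R i).2 ++ (γj ++ η)).length ≤ n := by
        obtain ⟨hpre, hneq⟩ := hRlt i j hij
        have hlt : (R i).2.length < (R j).2.length := by
          rcases Nat.lt_or_ge (R i).2.length (R j).2.length with h | h
          · exact h
          · exact absurd (List.IsPrefix.eq_of_length_le hpre h) hneq
        have : β.length = (R j).2.length + γj.length := by
          rw [hβeq, List.length_append]
        simp only [List.length_append] at hl ⊢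
        omega
      have hIH := ih ((R i).2 ++ (γj ++ η)) hlen hw'
      -- cancel the common prefix (R i).2 ∈ E
      have e3 := outs_cancel M N (R i).2 (γj ++ η) hIH (hMN _ (hRE i).1)
      -- final computation
      have hassoc : β ++ η = (R j).2 ++ (γj ++ η) := by
        rw [hβeq, List.append_assoc]
      rw [hassoc, Mealy.outs_append M M.start (R j).2 (γj ++ η),
        Mealy.outs_append N N.start (R j).2 (γj ++ η),
        hMN _ (hRE j).1, houteq.symm, e3, hEq]
    rcases lt_or_gt_of_ne hij0 with h | h
    · exact key i0 j0 h hEq0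
    · exact key j0 i0 h hEq0.symm
end
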